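/- Let X be a topological space. Every set in the Boolean algebra generated by the open sets of X (i.e. every finite Boolean combination of open sets) is an n-difference of open sets for some n ∈ ℕ. Conversely, every n-difference of open sets is a finite Boolean combination of open sets. Hence BC(Σ⁰₁) = ⋃_{n∈ℕ} D_n(Σ⁰₁). -/

import Mathlib

/-- `Y` is an `n`-difference of open sets. -/
def IsNDiff {X : Type*} [TopologicalSpace X] (n : ℕ) (Y : Set X) : Prop :=
  ∃ A : ℕ → Set X, (∀ i, IsOpen (A i)) ∧ (∀ i j, i ≤ j → A i ⊆ A j) ∧
    ∀ x, x ∈ Y ↔ ∃ i, i < n ∧ x ∈ A i ∧ (∀ j, j < i → x ∉ A j) ∧ (n - i) % 2 = 1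

/-- The Boolean algebra of sets generated by the open sets: finite Boolean
combinations of open sets. -/
inductive BCOpen {X : Type*} [TopologicalSpace X] : Set X → Prop
  | basic (U : Set X) : IsOpen U → BCOpen U
  | compl (S : Set X) : BCOpen S → BCOpen Sᶜ
  | union (S T : Set X) : BCOpen S → BCOpen T → BCOpen (S ∪ T)

open Classical in
noncomputable def cCount {X : Type*} (A : ℕ → Set X) (n : ℕ) (x : X) : ℕ :=
  ((Finset.range n).filter (fun i => x ∈ A i)).card

open Classical in
lemma cCount_le {X : Type*} (A : ℕ → Set X) (n : ℕ) (x : X) : cCount A n x ≤ n := by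
  classical
  calc ((Finset.range n).filter (fun i => x ∈ A i)).card ≤ (Finset.range n).card :=
        Finset.card_filter_le _ _
    _ = n := Finset.card_range n

open Classical in
lemma filter_eq_Ico {X : Type*} (A : ℕ → Set X)
    (mono : ∀ i j, i ≤ j → A i ⊆ A j) (n : ℕ) (x : X)
    (h : ∃ i, x ∈ A i) :
    (Finset.range n).filter (fun i => x ∈ A i) = Finset.Ico (Nat.find h) n := by
  ext i
  simp only [Finset.mem_filter, Finset.mem_range, Finset.mem_Ico]
  constructor
  · rintro ⟨hi, hx⟩
    exact ⟨Nat.find_min' h hx, hi⟩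
  · rintro ⟨hf, hi⟩
    exact ⟨hi, mono _ _ hf (Nat.find_spec h)⟩

open Classical in
lemma ndiff_cond_iff_cCount {X : Type*} (A : ℕ → Set X)
    (mono : ∀ i j, i ≤ j → A i ⊆ A j) (n : ℕ) (x : X) :
    (∃ i, i < n ∧ x ∈ A i ∧ (∀ j, j < i → x ∉ A j) ∧ (n - i) % 2 = 1) ↔
      cCount A n x % 2 = 1 := by
  by_cases h : ∃ i, i < n ∧ x ∈ A i
  · obtain ⟨i1, hi1n, hi1⟩ := h
    have he : ∃ i, x ∈ A i := ⟨i1, hi1⟩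
    have hlt : Nat.find he < n := lt_of_le_of_lt (Nat.find_min' he hi1) hi1n
    have hcard : cCount A n x = n - Nat.find he := by
      rw [cCount, filter_eq_Ico A mono n x he, Nat.card_Ico]
    rw [hcard]
    constructor
    · rintro ⟨i, hin, hxi, hmin, hpar⟩
      have h1 : Nat.find he ≤ i := Nat.find_min' he hxi
      have h2 : i ≤ Nat.find he := by
        by_contra hc
        exact hmin _ (lt_of_not_ge hc) (Nat.find_spec he)
      rw [le_antisymm h2 h1] at hpar
      exact hpar
    · intro hpar
      exact ⟨Nat.find he, hlt, Nat.find_spec he,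
        fun j hj => Nat.find_min he hj, hpar⟩
  · push_neg at h
    have hcard : cCount A n x = 0 := by
      rw [cCount, Finset.card_eq_zero, Finset.filter_eq_empty_iff]
      intro i hi
      exact h i (Finset.mem_range.mp hi)
    rw [hcard]
    simp only [Nat.zero_mod]
    constructor
    · rintro ⟨i, hin, hxi, -, -⟩
      exact absurd hxi (h i hin)
    · omega

/-- count characterization of IsNDiff membership -/
lemma isNDiff_iff_count {X : Type*} [TopologicalSpace X] (n : ℕ) (Y : Set X) :
    IsNDiff n Y ↔ ∃ A : ℕ → Set X, (∀ i, IsOpen (A i)) ∧ (∀ i j, i ≤ j → A i ⊆ A j) ∧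
      ∀ x, x ∈ Y ↔ cCount A n x % 2 = 1 := by
  constructor <;> rintro ⟨A, hopen, hmono, hmem⟩ <;>
    exact ⟨A, hopen, hmono, fun x => (hmem x).trans
      (by rw [ndiff_cond_iff_cCount A hmono n x]) ⟩

lemma isNDiff_of_isOpen {X : Type*} [TopologicalSpace X] {U : Set X} (hU : IsOpen U) :
    IsNDiff 1 U := by
  refine ⟨fun _ => U, fun _ => hU, fun _ _ _ => le_refl _, fun x => ?_⟩
  constructor
  · intro hx
    exact ⟨0, by omega, hx, by omega, by omega⟩
  · rintro ⟨i, -, hx, -, -⟩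
    exact hx

lemma isNDiff_compl {X : Type*} [TopologicalSpace X] {n : ℕ} {Y : Set X}
    (h : IsNDiff n Y) : IsNDiff (n + 1) Yᶜ := by
  classical
  rw [isNDiff_iff_count] at h ⊢
  obtain ⟨A, hopen, hmono, hmem⟩ := h
  refine ⟨fun i => if i < n then A i else Set.univ, ?_, ?_, ?_⟩
  · intro i
    by_cases hi : i < n <;> simp only [hi, if_true, if_false]
    · exact hopen i
    · exact isOpen_univ
  · intro i j hij
    by_cases hi : i < n <;> by_cases hj : j < n <;>
        simp only [hi, hj, if_true, if_false]
    · exact hmono i j hij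
    · exact Set.subset_univ _
    · omega
    · exact le_refl _
  · intro x
    have hc : cCount (fun i => if i < n then A i else Set.univ) (n + 1) x
        = cCount A n x + 1 := by
      rw [cCount, cCount, Finset.range_add_one, Finset.filter_insert]
      rw [if_pos (by simp)]
      rw [Finset.card_insert_of_notMem (by simp [Finset.mem_filter])]
      congr 1
      apply congrArg
      apply Finset.filter_congr
      intro i hi
      simp [Finset.mem_range.mp hi]
    rw [hc, Set.mem_compl_iff, hmem x]
    omega

/-- parity-mixing monotone function for the union construction -/
def fMix (a b : ℕ) : ℕ := if a % 2 = 1 ∧ b % 2 = 1 then a + b - 1 else a + b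

lemma fMix_mono {a a' b b' : ℕ} (ha : a ≤ a') (hb : b ≤ b') : fMix a b ≤ fMix a' b' := by
  unfold fMix; split_ifs <;> omega

lemma fMix_parity (a b : ℕ) : fMix a b % 2 = 1 ↔ (a % 2 = 1 ∨ b % 2 = 1) := by
  unfold fMix; split_ifs <;> omega

lemma fMix_le (a b : ℕ) : fMix a b ≤ a + b := by
  unfold fMix; split_ifs <;> omega

open Classical in
lemma le_cCount_iff {X : Type*} (A : ℕ → Set X) (mono : ∀ i j, i ≤ j → A i ⊆ A j)
    (m a : ℕ) (x : X) (ha1 : 1 ≤ a) (ham : a ≤ m) :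
    a ≤ cCount A m x ↔ x ∈ A (m - a) := by
  constructor
  · intro hle
    have hpos : 0 < ((Finset.range m).filter (fun i => x ∈ A i)).card := by
      have := cCount_le A m x
      rw [cCount] at hle
      omega
    obtain ⟨i, hi⟩ := Finset.card_pos.mp hpos
    rw [Finset.mem_filter, Finset.mem_range] at hi
    have he : ∃ i, x ∈ A i := ⟨i, hi.2⟩
    have hc : cCount A m x = m - Nat.find he := by
      rw [cCount, filter_eq_Ico A mono m x he, Nat.card_Ico]
    have : Nat.find he ≤ m - a := by omega
    exact mono _ _ this (Nat.find_spec he)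
  · intro hx
    have hsub : Finset.Ico (m - a) m ⊆ (Finset.range m).filter (fun i => x ∈ A i) := by
      intro i hi
      rw [Finset.mem_Ico] at hi
      rw [Finset.mem_filter, Finset.mem_range]
      exact ⟨hi.2, mono _ _ hi.1 hx⟩
    have := Finset.card_le_card hsub
    rw [Nat.card_Ico] at this
    rw [cCount]
    omega

lemma isNDiff_union {X : Type*} [TopologicalSpace X] {m n : ℕ} {Y Z : Set X}
    (hY : IsNDiff m Y) (hZ : IsNDiff n Z) : IsNDiff (m + n) (Y ∪ Z) := by
  classical
  rw [isNDiff_iff_count] at hY hZ ⊢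
  obtain ⟨A, hAopen, hAmono, hAmem⟩ := hY
  obtain ⟨B, hBopen, hBmono, hBmem⟩ := hZ
  set Abar : ℕ → Set X := fun a => if a = 0 then Set.univ else A (m - a) with hAbar
  set Bbar : ℕ → Set X := fun b => if b = 0 then Set.univ else B (n - b) with hBbar
  have hAbar_open : ∀ a, IsOpen (Abar a) := by
    intro a
    rw [hAbar]
    dsimp only
    split
    · exact isOpen_univ
    · exact hAopen _
  have hBbar_open : ∀ b, IsOpen (Bbar b) := by
    intro b
    rw [hBbar]
    dsimp only
    split
    · exact isOpen_univ
    · exact hBopen _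
  have hAbar_mem : ∀ a ≤ m, ∀ x, x ∈ Abar a ↔ a ≤ cCount A m x := by
    intro a ham x
    by_cases h : a = 0
    · simp [hAbar, h]
    · rw [hAbar]
      simp only [h, if_false]
      exact (le_cCount_iff A hAmono m a x (by omega) ham).symm
  have hBbar_mem : ∀ b ≤ n, ∀ x, x ∈ Bbar b ↔ b ≤ cCount B n x := by
    intro b hbn x
    by_cases h : b = 0
    · simp [hBbar, h]
    · rw [hBbar]
      simp only [h, if_false]
      exact (le_cCount_iff B hBmono n b x (by omega) hbn).symm
  set C : ℕ → Set X := fun k => ⋃ a ∈ Finset.range (m + 1), ⋃ b ∈ Finset.range (n + 1),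
    if m + n - k ≤ fMix a b then Abar a ∩ Bbar b else (∅ : Set X) with hC
  have mem_C : ∀ k x, x ∈ C k ↔ m + n - k ≤ fMix (cCount A m x) (cCount B n x) := by
    intro k x
    rw [hC]
    simp only [Set.mem_iUnion]
    constructor
    · rintro ⟨a, ha, b, hb, hx⟩
      rw [Finset.mem_range] at ha hb
      by_cases hcond : m + n - k ≤ fMix a b
      · rw [if_pos hcond] at hx
        have h1 : a ≤ cCount A m x := (hAbar_mem a (by omega) x).mp hx.1
        have h2 : b ≤ cCount B n x := (hBbar_mem b (by omega) x).mp hx.2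
        exact le_trans hcond (fMix_mono h1 h2)
      · rw [if_neg hcond] at hx
        exact absurd hx (Set.notMem_empty x)
    · intro h
      refine ⟨cCount A m x, Finset.mem_range.mpr (by have := cCount_le A m x; omega),
        cCount B n x, Finset.mem_range.mpr (by have := cCount_le B n x; omega), ?_⟩
      rw [if_pos h]
      exact ⟨(hAbar_mem _ (cCount_le A m x) x).mpr le_rfl,
        (hBbar_mem _ (cCount_le B n x) x).mpr le_rfl⟩
  refine ⟨C, ?_, ?_, ?_⟩
  · intro k
    rw [hC]
    apply isOpen_biUnion
    intro a _
    apply isOpen_biUnion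
    intro b _
    split
    · exact (hAbar_open a).inter (hBbar_open b)
    · exact isOpen_empty
  · intro k k' hkk' x hx
    rw [mem_C] at hx ⊢
    omega
  · intro x
    have hFle : fMix (cCount A m x) (cCount B n x) ≤ m + n :=
      le_trans (fMix_le _ _) (by have := cCount_le A m x; have := cCount_le B n x; omega)
    have hcC : cCount C (m + n) x = fMix (cCount A m x) (cCount B n x) := by
      rw [cCount]
      have : (Finset.range (m + n)).filter (fun k => x ∈ C k) =
          Finset.Ico (m + n - fMix (cCount A m x) (cCount B n x)) (m + n) := by
        ext k
        rw [Finset.mem_filter, Finset.mem_range, Finset.mem_Ico, mem_C]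
        omega
      rw [this, Nat.card_Ico]
      omega
    rw [hcC, fMix_parity, Set.mem_union, hAmem, hBmem]

lemma BCOpen.inter' {X : Type*} [TopologicalSpace X] {S T : Set X}
    (hS : BCOpen S) (hT : BCOpen T) : BCOpen (S ∩ T) := by
  have h := BCOpen.compl _ (BCOpen.union _ _ (BCOpen.compl _ hS) (BCOpen.compl _ hT))
  simpa [Set.compl_union] using h

lemma bcOpen_finset_union {X ι : Type*} [TopologicalSpace X] (s : Finset ι)
    (g : ι → Set X) (h : ∀ i ∈ s, BCOpen (g i)) : BCOpen (⋃ i ∈ s, g i) := by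
  classical
  induction s using Finset.induction with
  | empty => simpa using BCOpen.basic _ isOpen_empty
  | insert a s hnot ih =>
    rw [Finset.set_biUnion_insert]
    exact BCOpen.union _ _ (h _ (Finset.mem_insert_self _ _))
      (ih fun i hi => h i (Finset.mem_insert_of_mem hi))

lemma bcOpen_finset_inter {X ι : Type*} [TopologicalSpace X] (s : Finset ι)
    (g : ι → Set X) (h : ∀ i ∈ s, BCOpen (g i)) : BCOpen (⋂ i ∈ s, g i) := by
  classical
  induction s using Finset.induction with
  | empty => simpa using BCOpen.basic _ isOpen_univ
  | insert a s hnot ih =>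
    rw [Finset.set_biInter_insert]
    exact BCOpen.inter' (h _ (Finset.mem_insert_self _ _))
      (ih fun i hi => h i (Finset.mem_insert_of_mem hi))

lemma bcOpen_of_isNDiff {X : Type*} [TopologicalSpace X] {n : ℕ} {Y : Set X}
    (h : IsNDiff n Y) : BCOpen Y := by
  classical
  obtain ⟨A, hopen, hmono, hmem⟩ := h
  have hEq : Y = ⋃ i ∈ Finset.range n,
      if (n - i) % 2 = 1 then A i ∩ ⋂ j ∈ Finset.range i, (A j)ᶜ else (∅ : Set X) := by
    ext x
    rw [hmem x]
    simp only [Set.mem_iUnion]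
    constructor
    · rintro ⟨i, hin, hxi, hmin, hpar⟩
      refine ⟨i, Finset.mem_range.mpr hin, ?_⟩
      rw [if_pos hpar]
      refine ⟨hxi, ?_⟩
      simp only [Set.mem_iInter, Set.mem_compl_iff]
      intro j hj
      exact hmin j (Finset.mem_range.mp hj)
    · rintro ⟨i, hi, hx⟩
      rw [Finset.mem_range] at hi
      by_cases hpar : (n - i) % 2 = 1
      · rw [if_pos hpar] at hx
        obtain ⟨hxi, hrest⟩ := hx
        simp only [Set.mem_iInter, Set.mem_compl_iff] at hrest
        exact ⟨i, hi, hxi, fun j hj => hrest j (Finset.mem_range.mpr hj), hpar⟩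
      · rw [if_neg hpar] at hx
        exact absurd hx (Set.notMem_empty x)
  rw [hEq]
  apply bcOpen_finset_union
  intro i _
  split
  · exact BCOpen.inter' (BCOpen.basic _ (hopen i))
      (bcOpen_finset_inter _ _ fun j _ => BCOpen.compl _ (BCOpen.basic _ (hopen j)))
  · exact BCOpen.basic _ isOpen_empty


/-- `BC(Σ⁰₁) = ⋃_{n} D_n(Σ⁰₁)`: a set is a finite Boolean combination of open
sets iff it is an `n`-difference of open sets for some `n`. -/
theorem bcOpen_iff_exists_nDiff {X : Type*} [TopologicalSpace X] (Y : Set X) :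
    BCOpen Y ↔ ∃ n, IsNDiff n Y := by
  constructor
  · intro h
    induction h with
    | basic U hU => exact ⟨1, isNDiff_of_isOpen hU⟩
    | compl S _ ih =>
      obtain ⟨n, hn⟩ := ih
      exact ⟨n + 1, isNDiff_compl hn⟩
    | union S T _ _ ihS ihT =>
      obtain ⟨m, hm⟩ := ihS
      obtain ⟨n, hn⟩ := ihT
      exact ⟨m + n, isNDiff_union hm hn⟩
  · rintro ⟨n, hn⟩
    exact bcOpen_of_isNDiff hn
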